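/- Let q ≥ 1 be a natural number and let X be a finite simple (q+1)-regular graph with adjacency matrix A. Then every complex number u satisfying det(I - u·A + qu²·I) = 0 lies in the set C; consequently all zeros of the zeta polynomial Z(X,u) = (1-u²)^(-χ(X)) · det(I - u·A + qu²·I) of X lie on C. -/

import Mathlib

/-- The region `C = {u : |u| = q^(-1/2)} ∪ [-1,-1/q] ∪ [1/q,1]`,
expressed as: `|u| = q^(-1/2)`, or `u` is real with `1/q ≤ |u| ≤ 1`. -/
def regionC (q : ℝ) : Set ℂ :=
  {u : ℂ | ‖u‖ = (Real.sqrt q)⁻¹ ∨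
    (u.im = 0 ∧ 1 / q ≤ |u.re| ∧ |u.re| ≤ 1)}

open Complex in
lemma quadC (q : ℕ) (hq : 1 ≤ q) (lam : ℂ) (hre : lam.im = 0)
    (hb : ‖lam‖ ≤ q + 1) (u : ℂ)
    (h : 1 - lam * u + (q : ℂ) * u ^ 2 = 0) : u ∈ regionC q := by
  have hqR : (1 : ℝ) ≤ (q : ℝ) := by exact_mod_cast hq
  have hq0 : (0 : ℝ) < q := by linarith
  have hu0 : u ≠ 0 := by rintro rfl; simp at h
  have hlamconj : (starRingEnd ℂ) lam = lam := Complex.conj_eq_iff_im.mpr hre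
  by_cases him : u.im = 0
  · -- real case
    right
    set x := u.re with hx
    have hux : u = (x : ℂ) := Complex.ext rfl him
    set l := lam.re with hl
    have hll : lam = (l : ℂ) := Complex.ext rfl hre
    have hx0 : x ≠ 0 := by
      intro h0; apply hu0; rw [hux, h0]; simp
    have hreal : 1 - l * x + (q : ℝ) * x ^ 2 = 0 := by
      have := h
      rw [hux, hll] at this
      exact_mod_cast this
    have hlb : |l| ≤ (q : ℝ) + 1 := by
      have : ‖lam‖ = |l| := by rw [hll, Complex.norm_real, Real.norm_eq_abs]
      rw [this] at hb; exact_mod_cast hb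
    have ht : 0 < |x| := abs_pos.mpr hx0
    have key : 1 + (q:ℝ) * |x| ^ 2 ≤ ((q:ℝ) + 1) * |x| := by
      have h1 : l * x = 1 + (q:ℝ) * x ^ 2 := by linarith
      have h2 : |l * x| = 1 + (q:ℝ) * x ^ 2 := by
        rw [h1, abs_of_pos]; positivity
      calc 1 + (q:ℝ) * |x| ^ 2 = |l * x| := by rw [h2]; congr 2; exact _root_.sq_abs x
        _ = |l| * |x| := abs_mul _ _
        _ ≤ ((q:ℝ) + 1) * |x| := by
            exact mul_le_mul_of_nonneg_right hlb (le_of_lt ht)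
    refine ⟨him, ?_, ?_⟩
    · rw [div_le_iff₀ hq0]
      by_contra hc
      push_neg at hc
      have h1 : |x| < 1 := by nlinarith
      nlinarith [mul_pos (show (0:ℝ) < 1 - |x| * q by linarith)
        (show (0:ℝ) < 1 - |x| by linarith)]
    · by_contra hc
      push_neg at hc
      have h1 : 1 < (q:ℝ) * |x| := by nlinarith
      nlinarith [mul_pos (show (0:ℝ) < (q:ℝ) * |x| - 1 by linarith)
        (show (0:ℝ) < |x| - 1 by linarith)]
  · -- nonreal case
    left
    set w := (starRingEnd ℂ) u with hw
    have h' : 1 - lam * w + (q : ℂ) * w ^ 2 = 0 := by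
      have := congrArg (starRingEnd ℂ) h
      simpa [hlamconj, hw] using this
    have hne : u - w ≠ 0 := by
      rw [hw, Complex.sub_conj]
      simp [Complex.ext_iff, him]
    have hfac : (u - w) * ((q : ℂ) * (u + w) - lam) = 0 := by ring_nf; linear_combination h - h'
    have hlam : lam = (q : ℂ) * (u + w) := by
      rcases mul_eq_zero.mp hfac with h1 | h1
      · exact absurd h1 hne
      · linear_combination -h1
    have hprod : (q : ℂ) * (u * w) = 1 := by linear_combination -h - u * hlam
    have hprod2 : ((q : ℝ) * Complex.normSq u : ℝ) = (1 : ℝ) := by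
      have : (q : ℂ) * (Complex.normSq u : ℂ) = 1 := by
        rw [← Complex.mul_conj]; exact hprod
      exact_mod_cast this
    have hns' : Complex.normSq u = 1 / q := by
      field_simp
      linarith
    rw [Complex.norm_def, hns', one_div, Real.sqrt_inv]

open Finset Matrix

lemma eig_real_bdd (q : ℕ) {V : Type*} [Fintype V] [DecidableEq V]
    (G : SimpleGraph V) [DecidableRel G.Adj]
    (hreg : G.IsRegularOfDegree (q + 1)) (lam : ℂ) (v : V → ℂ) (hv : v ≠ 0)
    (hAv : ∀ i, (G.adjMatrix ℂ *ᵥ v) i = lam * v i) :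
    lam.im = 0 ∧ ‖lam‖ ≤ q + 1 := by
  obtain ⟨i₁, hi₁⟩ : ∃ i, v i ≠ 0 := Function.ne_iff.mp hv
  have hAreal : ∀ i j, (starRingEnd ℂ) (G.adjMatrix ℂ i j) = G.adjMatrix ℂ i j := by
    intro i j; simp [SimpleGraph.adjMatrix_apply, apply_ite]
  have hAsym : ∀ i j, G.adjMatrix ℂ i j = G.adjMatrix ℂ j i := by
    intro i j; simp [SimpleGraph.adjMatrix_apply, G.adj_comm]
  set S := ∑ i, (starRingEnd ℂ) (v i) * (G.adjMatrix ℂ *ᵥ v) i with hSdef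
  set n := ∑ i, (starRingEnd ℂ) (v i) * v i with hndef
  have hS1 : S = ∑ i, ∑ j, G.adjMatrix ℂ i j * ((starRingEnd ℂ) (v i) * v j) := by
    rw [hSdef]
    refine sum_congr rfl fun i _ => ?_
    rw [Matrix.mulVec, dotProduct, Finset.mul_sum]
    exact sum_congr rfl fun j _ => by ring
  have hSconj : (starRingEnd ℂ) S = S := by
    rw [hS1, map_sum]
    simp only [map_sum, _root_.map_mul, hAreal, Complex.conj_conj]
    rw [Finset.sum_comm]
    exact sum_congr rfl fun a _ => sum_congr rfl fun b _ => by rw [hAsym b a]; ring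
  have hS2 : S = lam * n := by
    rw [hSdef, hndef, Finset.mul_sum]
    exact sum_congr rfl fun i _ => by rw [hAv i]; ring
  have hnreal : (starRingEnd ℂ) n = n := by
    rw [hndef, map_sum]
    exact sum_congr rfl fun i _ => by rw [_root_.map_mul, Complex.conj_conj]; ring
  have hn0 : n ≠ 0 := by
    have hcast : n = ((∑ i, Complex.normSq (v i) : ℝ) : ℂ) := by
      rw [hndef]; push_cast
      exact sum_congr rfl fun i _ => by
        rw [mul_comm, Complex.mul_conj]
    rw [hcast]
    have hpos : 0 < ∑ i, Complex.normSq (v i) :=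
      Finset.sum_pos' (fun i _ => Complex.normSq_nonneg _)
        ⟨i₁, mem_univ i₁, Complex.normSq_pos.mpr hi₁⟩
    exact_mod_cast hpos.ne'
  have hlamconj : (starRingEnd ℂ) lam = lam := by
    have h1 : (starRingEnd ℂ) lam * n = lam * n := by
      have := hSconj
      rw [hS2, _root_.map_mul, hnreal] at this
      exact this
    exact mul_right_cancel₀ hn0 h1
  refine ⟨Complex.conj_eq_iff_im.mp hlamconj, ?_⟩
  -- bound
  obtain ⟨i₀, -, hmax⟩ := Finset.exists_max_image Finset.univ
    (fun i => ‖v i‖) ⟨i₁, mem_univ i₁⟩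
  have ht : 0 < ‖v i₀‖ :=
    lt_of_lt_of_le (by simpa using hi₁) (hmax i₁ (mem_univ i₁))
  have key : ‖lam‖ * ‖v i₀‖ ≤ ((q : ℝ) + 1) * ‖v i₀‖ := by
    calc ‖lam‖ * ‖v i₀‖ = ‖lam * v i₀‖ :=
          (norm_mul _ _).symm
      _ = ‖(G.adjMatrix ℂ *ᵥ v) i₀‖ := by rw [hAv i₀]
      _ = ‖∑ j ∈ G.neighborFinset i₀, v j‖ := by
          rw [SimpleGraph.adjMatrix_mulVec_apply]
      _ ≤ ∑ j ∈ G.neighborFinset i₀, ‖v j‖ := norm_sum_le _ _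
      _ ≤ ∑ _j ∈ G.neighborFinset i₀, ‖v i₀‖ :=
          Finset.sum_le_sum fun j _ => hmax j (mem_univ j)
      _ = ((q : ℝ) + 1) * ‖v i₀‖ := by
          rw [Finset.sum_const, nsmul_eq_mul]
          congr 1
          have : (G.neighborFinset i₀).card = q + 1 := hreg i₀
          rw [this]; push_cast; ring
  exact le_of_mul_le_mul_right key ht


/-- For a finite simple `(q+1)`-regular graph `X` with adjacency matrix `A`,
every zero of `det(I - u·A + qu²·I)` lies in `C`; consequently every zero of
the zeta polynomial `Z(X,u) = (1-u²)^(-χ(X)) · det(I - u·A + qu²·I)` lies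
on `C`. -/
theorem zeta_zeros_lie_on_C (q : ℕ) (hq : 1 ≤ q)
    {V : Type*} [Fintype V] [DecidableEq V]
    (G : SimpleGraph V) [DecidableRel G.Adj]
    (hreg : G.IsRegularOfDegree (q + 1)) :
    (∀ u : ℂ,
        ((1 : Matrix V V ℂ) - u • G.adjMatrix ℂ
          + ((q : ℂ) * u ^ 2) • (1 : Matrix V V ℂ)).det = 0 →
        u ∈ regionC q) ∧
    (∀ u : ℂ, u ^ 2 ≠ 1 →
        (1 - u ^ 2) ^ (-((Fintype.card V : ℤ) - (G.edgeFinset.card : ℤ))) *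
          ((1 : Matrix V V ℂ) - u • G.adjMatrix ℂ
            + ((q : ℂ) * u ^ 2) • (1 : Matrix V V ℂ)).det = 0 →
        u ∈ regionC q) := by
  have main : ∀ u : ℂ,
      ((1 : Matrix V V ℂ) - u • G.adjMatrix ℂ
        + ((q : ℂ) * u ^ 2) • (1 : Matrix V V ℂ)).det = 0 → u ∈ regionC q := by
    intro u hdet
    have hu0 : u ≠ 0 := by
      rintro rfl
      simp at hdet
    obtain ⟨v, hv, hMv⟩ := Matrix.exists_mulVec_eq_zero_iff.mpr hdet
    set lam := (1 + (q : ℂ) * u ^ 2) / u with hlam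
    have hAv : ∀ i, (G.adjMatrix ℂ *ᵥ v) i = lam * v i := by
      intro i
      have h0 := congrFun hMv i
      simp only [Matrix.sub_mulVec, Matrix.add_mulVec, Matrix.smul_mulVec,
        Matrix.one_mulVec, Pi.add_apply, Pi.sub_apply, Pi.smul_apply, smul_eq_mul,
        Pi.zero_apply] at h0
      rw [hlam, div_mul_eq_mul_div, eq_div_iff hu0]
      linear_combination -h0
    obtain ⟨him, hbd⟩ := eig_real_bdd q G hreg lam v hv hAv
    have hquad : 1 - lam * u + (q : ℂ) * u ^ 2 = 0 := by
      have : lam * u = 1 + (q : ℂ) * u ^ 2 := by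
        rw [hlam]; field_simp
      linear_combination -this
    exact quadC q hq lam him hbd u hquad
  refine ⟨main, fun u hu2 h => ?_⟩
  have hz : (1 : ℂ) - u ^ 2 ≠ 0 := sub_ne_zero.mpr fun he => hu2 he.symm
  have hzp : (1 - u ^ 2) ^ (-((Fintype.card V : ℤ) - (G.edgeFinset.card : ℤ))) ≠ 0 :=
    zpow_ne_zero _ hz
  exact main u ((mul_eq_zero.mp h).resolve_left hzp)
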